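/- Let c ≥ 2 and let Φ : 𝒞(ℝ^c) → 𝒞(ℝ^d) be a non-trivial lattice homomorphism. Then the map x ↦ Φ({x}) is injective on ℝ^c, and Φ(∅) is a proper subset of Φ({x}) for every x ∈ ℝ^c; in particular Φ({x}) ≠ ∅ for every x ∈ ℝ^c. -/

import Mathlib

open Set

noncomputable section

/-- Euclidean space `ℝ^n`. -/
abbrev E (n : ℕ) := EuclideanSpace ℝ (Fin n)

/-- A convex body of `ℝ^n`: a compact convex subset (possibly empty). -/
def IsBody {n : ℕ} (C : Set (E n)) : Prop := Convex ℝ C ∧ IsCompact C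

/-- `Φ` represents a lattice homomorphism from `𝒞(ℝ^c)` to `𝒞(ℝ^d)`: it maps convex bodies
to convex bodies, and on convex bodies it preserves intersections (the lattice meet) and
convex hulls of unions (the lattice join). -/
def IsLatHom {c d : ℕ} (Φ : Set (E c) → Set (E d)) : Prop :=
  (∀ C, IsBody C → IsBody (Φ C)) ∧
  ∀ C D : Set (E c), IsBody C → IsBody D →
    Φ (C ∩ D) = Φ C ∩ Φ D ∧ Φ (convexHull ℝ (C ∪ D)) = convexHull ℝ (Φ C ∪ Φ D)

/-- `Φ` is non-trivial: it is not constant on convex bodies. -/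
def NonTrivial {c d : ℕ} (Φ : Set (E c) → Set (E d)) : Prop :=
  ∃ C D : Set (E c), IsBody C ∧ IsBody D ∧ Φ C ≠ Φ D

/-- The closed ray emanating from `o` in direction `u`. -/
def Ray {n : ℕ} (o u : E n) : Set (E n) := {p | ∃ t : ℝ, 0 ≤ t ∧ p = o + t • u}

/-- An affine hyperplane of `ℝ^n`: a nonempty affine subspace of dimension `n - 1`. -/
def IsHyperplane {n : ℕ} (H : AffineSubspace ℝ (E n)) : Prop :=
  (H : Set (E n)).Nonempty ∧ Module.finrank ℝ H.direction + 1 = n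

open scoped Classical in
/-- The dimension of a convex set: the dimension of its affine hull, with `sdim ∅ = -1`. -/
def sdim {n : ℕ} (s : Set (E n)) : ℤ :=
  if s = ∅ then -1 else Module.finrank ℝ (affineSpan ℝ s).direction


lemma abs_coord_le_norm {c : ℕ} (x : E c) (i : Fin c) : |x i| ≤ ‖x‖ := by
  have h := abs_real_inner_le_norm x (EuclideanSpace.single i (1:ℝ))
  simpa [EuclideanSpace.inner_single_right, EuclideanSpace.norm_single] using h

lemma euclid_sum_single {c : ℕ} (x : E c) :
    ∑ i : Fin c, x i • EuclideanSpace.single i (1:ℝ) = x := by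
  have h := (EuclideanSpace.basisFun (Fin c) ℝ).sum_repr x
  simpa [EuclideanSpace.basisFun_apply, EuclideanSpace.basisFun_repr] using h

lemma compact_subset_hull_finite {c : ℕ} {C : Set (E c)} (hC : IsCompact C) :
    ∃ F : Set (E c), F.Finite ∧ C ⊆ convexHull ℝ F := by
  obtain ⟨R, hR⟩ := hC.isBounded.subset_closedBall 0
  set R' : ℝ := max R 1 with hR'def
  have hR'pos : (0:ℝ) < R' := lt_of_lt_of_le one_pos (le_max_right _ _)
  set s : ℝ := (c + 1) * R' with hsdef
  have hspos : (0:ℝ) < s := by positivity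
  set e : Fin c → E c := fun i => EuclideanSpace.single i (1:ℝ) with hedef
  refine ⟨insert 0 (⋃ i : Fin c, {s • e i, -(s • e i)}), ?_, ?_⟩
  · exact (Set.finite_iUnion fun i => (Set.finite_singleton _).insert _).insert 0
  · intro x hx
    have hxR : ‖x‖ ≤ R' := le_trans (by simpa using hR hx) (le_max_left _ _)
    classical
    set w : Option (Fin c) → ℝ := fun o => o.elim (1 - ∑ i : Fin c, |x i| / s) (fun i => |x i| / s) with hwdef
    set z : Option (Fin c) → E c := fun o => o.elim 0 (fun i => if 0 ≤ x i then s • e i else -(s • e i)) with hzdef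
    have hsum_le : ∑ i : Fin c, |x i| / s ≤ 1 := by
      have h1 : ∑ i : Fin c, |x i| ≤ ∑ _i : Fin c, ‖x‖ :=
        Finset.sum_le_sum fun i _ => abs_coord_le_norm x i
      have h2 : (c : ℝ) * ‖x‖ ≤ (c + 1) * R' := by
        have := norm_nonneg x
        nlinarith
      calc ∑ i : Fin c, |x i| / s = (∑ i : Fin c, |x i|) / s := by rw [Finset.sum_div]
        _ ≤ 1 := by
          rw [div_le_one hspos]
          have h3 : ∑ _i : Fin c, ‖x‖ = (c:ℝ) * ‖x‖ := by simp [mul_comm]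
          rw [hsdef]
          calc ∑ i : Fin c, |x i| ≤ (c:ℝ) * ‖x‖ := by rw [← h3]; exact h1
            _ ≤ (c + 1) * R' := h2
    have hw0 : ∀ o ∈ Finset.univ, 0 ≤ w o := by
      rintro (_ | i) _
      · simpa [hwdef] using hsum_le
      · have : 0 ≤ |x i| / s := by positivity
        simpa [hwdef] using this
    have hw1 : ∑ o : Option (Fin c), w o = 1 := by
      rw [Fintype.sum_option]
      simp [hwdef]
    have hz : ∀ o ∈ Finset.univ, z o ∈ convexHull ℝ (insert (0 : E c) (⋃ i : Fin c, {s • e i, -(s • e i)})) := by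
      rintro (_ | i) _
      · exact subset_convexHull ℝ _ (Set.mem_insert _ _)
      · apply subset_convexHull ℝ _
        apply Set.mem_insert_of_mem
        apply Set.mem_iUnion.mpr ⟨i, ?_⟩
        by_cases h : 0 ≤ x i <;> simp [hzdef, h]
    have hxeq : ∑ o : Option (Fin c), w o • z o = x := by
      rw [Fintype.sum_option]
      have : ∀ i : Fin c, w (some i) • z (some i) = x i • e i := by
        intro i
        by_cases h : 0 ≤ x i
        · rw [hwdef, hzdef]
          simp only [Option.elim, if_pos h, smul_smul]
          congr 1
          rw [div_mul_cancel₀]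
          · exact abs_of_nonneg h
          · exact ne_of_gt hspos
        · rw [hwdef, hzdef]
          simp only [Option.elim, if_neg h, smul_neg, smul_smul]
          rw [← neg_smul]
          congr 1
          rw [neg_eq_iff_eq_neg, div_mul_cancel₀ _ (ne_of_gt hspos)]
          rw [abs_of_neg (lt_of_not_ge h)]
      simp only [this]
      simp [hwdef, hzdef, euclid_sum_single]
      exact euclid_sum_single x
    rw [← hxeq]
    exact (convex_convexHull ℝ _).sum_mem hw0 hw1 hz

lemma body_empty {n : ℕ} : IsBody (∅ : Set (E n)) := ⟨convex_empty, isCompact_empty⟩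
lemma body_singleton {n : ℕ} (x : E n) : IsBody ({x} : Set (E n)) :=
  ⟨convex_singleton x, isCompact_singleton⟩
lemma body_hull {n : ℕ} {F : Set (E n)} (hF : F.Finite) : IsBody (convexHull ℝ F) :=
  ⟨convex_convexHull ℝ F, hF.isCompact_convexHull (𝕜 := ℝ)⟩

lemma latHom_mono {c d : ℕ} {Φ : Set (E c) → Set (E d)} (hΦ : IsLatHom Φ)
    {C D : Set (E c)} (bC : IsBody C) (bD : IsBody D) (h : C ⊆ D) : Φ C ⊆ Φ D := by
  have h2 := (hΦ.2 C D bC bD).1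
  rw [Set.inter_eq_left.mpr h] at h2
  rw [h2]
  exact Set.inter_subset_right

lemma latHom_const {c d : ℕ} {Φ : Set (E c) → Set (E d)} (hΦ : IsLatHom Φ)
    {x₀ : E c} (h0 : Φ {x₀} = Φ ∅) {C : Set (E c)} (bC : IsBody C) : Φ C = Φ ∅ := by
  have hA : ∀ D : Set (E c), IsBody D → Φ ∅ ⊆ Φ D := fun D bD =>
    latHom_mono hΦ body_empty bD (Set.empty_subset D)
  -- every singleton maps to Φ ∅
  have fconst : ∀ w : E c, Φ {w} = Φ ∅ := by
    intro w
    by_cases hw : w = x₀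
    · rw [hw, h0]
    · set y : E c := x₀ + (2:ℝ) • (w - x₀) with hy
      have hwy : w ≠ y := by
        intro h
        apply hw
        have : y - w = w - x₀ := by rw [hy]; module
        rw [← h, sub_self] at this
        have := sub_eq_zero.mp this.symm
        exact this
      have hpair : ({x₀} : Set (E c)) ∪ {y} = {x₀, y} := by
        rw [Set.singleton_union]
      have hseg : convexHull ℝ (({x₀} : Set (E c)) ∪ {y}) = segment ℝ x₀ y := by
        rw [hpair, convexHull_pair]
      have bseg : IsBody (segment ℝ x₀ y) := by
        rw [← hseg]; exact body_hull (((Set.finite_singleton _).union (Set.finite_singleton _)))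
      have hΦseg : Φ (segment ℝ x₀ y) = Φ {y} := by
        rw [← hseg, (hΦ.2 {x₀} {y} (body_singleton _) (body_singleton _)).2, h0,
          Set.union_eq_self_of_subset_left (hA _ (body_singleton y)),
          (hΦ.1 {y} (body_singleton y)).1.convexHull_eq]
      have hwseg : w ∈ segment ℝ x₀ y := by
        refine ⟨1/2, 1/2, by norm_num, by norm_num, by norm_num, ?_⟩
        rw [hy]; module
      have hsub : Φ {w} ⊆ Φ {y} := by
        rw [← hΦseg]
        exact latHom_mono hΦ (body_singleton w) bseg (Set.singleton_subset_iff.mpr hwseg)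
      have hint : Φ {w} ∩ Φ {y} = Φ ∅ := by
        rw [← (hΦ.2 {w} {y} (body_singleton _) (body_singleton _)).1,
          Set.singleton_inter_eq_empty.mpr (by simpa using hwy)]
      rw [← hint, Set.inter_eq_left.mpr hsub]
  -- convex hulls of finite sets map to Φ ∅
  have hullconst : ∀ F : Set (E c), F.Finite → Φ (convexHull ℝ F) = Φ ∅ := by
    intro F hF
    refine Set.Finite.induction_on F hF ?_ ?_
    · rw [convexHull_empty]
    · intro a F' _ hFfin ih
      rw [Set.insert_eq, ← convexHull_convexHull_union_right,
        (hΦ.2 {a} (convexHull ℝ F') (body_singleton a) (body_hull hFfin)).2,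
        fconst a, ih, Set.union_self, (hΦ.1 ∅ body_empty).1.convexHull_eq]
  obtain ⟨F, hFfin, hsub⟩ := compact_subset_hull_finite bC.2
  refine subset_antisymm ?_ (hA C bC)
  have := latHom_mono hΦ bC (body_hull hFfin) hsub
  rwa [hullconst F hFfin] at this


/-- For a non-trivial lattice homomorphism, `x ↦ Φ({x})` is injective, `Φ(∅)` is a proper
subset of each `Φ({x})`, and in particular `Φ({x}) ≠ ∅`. -/
theorem stmt_9 (c d : ℕ) (hc : 2 ≤ c) (Φ : Set (E c) → Set (E d))
    (hΦ : IsLatHom Φ) (hnt : NonTrivial Φ) :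
    Function.Injective (fun x : E c => Φ {x}) ∧
    (∀ x : E c, Φ (∅ : Set (E c)) ⊂ Φ {x}) ∧
    (∀ x : E c, (Φ ({x} : Set (E c))).Nonempty) := by
  have key : ∀ x : E c, Φ {x} ≠ Φ ∅ := by
    intro x hx
    obtain ⟨C, D, bC, bD, hCD⟩ := hnt
    exact hCD ((latHom_const hΦ hx bC).trans (latHom_const hΦ hx bD).symm)
  have hA : ∀ x : E c, Φ ∅ ⊆ Φ {x} := fun x =>
    latHom_mono hΦ body_empty (body_singleton x) (Set.empty_subset _)
  have hss : ∀ x : E c, Φ (∅ : Set (E c)) ⊂ Φ {x} := fun x =>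
    (hA x).ssubset_of_ne fun h => key x h.symm
  refine ⟨?_, hss, fun x => ?_⟩
  · intro x y hxy
    simp only at hxy
    by_contra hne
    apply key y
    have h := (hΦ.2 {x} {y} (body_singleton x) (body_singleton y)).1
    rw [Set.singleton_inter_eq_empty.mpr (by simpa using hne), hxy, Set.inter_self] at h
    exact h.symm
  · obtain ⟨p, hp, -⟩ := Set.exists_of_ssubset (hss x)
    exact ⟨p, hp⟩
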